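/- With B the relativised collapsing hierarchy: if α = α₁ + ... + αₙ is the Cantor normal form of α (n > 1, each αᵢ additive principal, α₁ ≥ ... ≥ αₙ), then for every ordinal η, α ∈ B(η) if and only if α₁, ..., αₙ ∈ B(η). -/

import Mathlib

open Ordinal

/-- The binary Veblen function: `veblen 0 β = ω ^ β`, and for `α > 0`,
`veblen α` enumerates the common fixed points of `veblen γ` for `γ < α`. -/
noncomputable def veblen : Ordinal → Ordinal → Ordinal :=
  WellFounded.fix Ordinal.lt_wf
    (fun α ih => if α = 0 then fun β => omega0 ^ β
      else (derivFamily (familyOfBFamily α (fun ξ h => ih ξ h)) : Ordinal.{0} → Ordinal.{0}))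

/-- The set of strongly critical ordinals. -/
def StronglyCritical (γ : Ordinal) : Prop := _root_.veblen γ 0 = γ

/-- `Gamma β` is the `β`-th strongly critical ordinal. -/
noncomputable def Gamma : Ordinal → Ordinal :=
  enumOrd {γ | StronglyCritical γ}

/-- The least uncountable cardinal (as an ordinal) greater than `θ`. -/
noncomputable def OmegaB (θ : Ordinal) : Ordinal :=
  sInf {o | θ < o ∧ o.card.ord = o ∧ Cardinal.aleph0 < o.card}

/-- Closure of `{0, Ω} ∪ {Γ_β : β ≤ θ}` under `+`, `veblen` and the
given partial collapsing function `f` on arguments below `α`. -/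
def closB (θ α : Ordinal) (f : ∀ ξ, ξ < α → Ordinal) : Set Ordinal :=
  ⋂₀ {S : Set Ordinal |
      0 ∈ S ∧ OmegaB θ ∈ S ∧ (∀ β ≤ θ, Gamma β ∈ S) ∧
      (∀ x ∈ S, ∀ y ∈ S, x + y ∈ S) ∧
      (∀ x ∈ S, ∀ y ∈ S, _root_.veblen x y ∈ S) ∧
      (∀ ξ (h : ξ < α), ξ ∈ S → f ξ h ∈ S)}

/-- The relativised collapsing function `ψ_θ`. -/
noncomputable def psiB (θ : Ordinal) : Ordinal → Ordinal :=
  WellFounded.fix Ordinal.lt_wf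
    (fun α ih => sInf {β | β ∉ closB θ α (fun ξ h => ih ξ h)})

/-- The relativised collapsing hierarchy `B_θ(α)`. -/
def BB (θ α : Ordinal) : Set Ordinal :=
  closB θ α (fun ξ _ => psiB θ ξ)

/-- The least strongly critical ordinal strictly above `δ`. -/
noncomputable def gammaSucc (δ : Ordinal) : Ordinal :=
  sInf {γ | δ < γ ∧ StronglyCritical γ}

/-! ### Auxiliary development -/

section Aux

theorem _root_.veblen_def (α : Ordinal) : _root_.veblen α =
    if α = 0 then fun β => omega0 ^ β
    else (derivFamily (familyOfBFamily α (fun ξ _ => _root_.veblen ξ)) : Ordinal.{0} → Ordinal.{0}) := by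
  rw [_root_.veblen, WellFounded.fix_eq]

theorem _root_.isNormal_veblen (α : Ordinal.{0}) : Order.IsNormal (_root_.veblen α) := by
  rw [_root_.veblen_def]
  split
  · exact isNormal_opow one_lt_omega0
  · exact isNormal_derivFamily _

theorem _root_.veblen_zero (b : Ordinal) : _root_.veblen 0 b = omega0 ^ b := by
  rw [_root_.veblen_def]; simp

theorem _root_.veblen_principal (a b : Ordinal.{0}) : ∃ γ : Ordinal, _root_.veblen a b = omega0 ^ γ := by
  rcases eq_or_ne a 0 with rfl | ha
  · exact ⟨b, _root_.veblen_zero b⟩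
  · refine ⟨_root_.veblen a b, ?_⟩
    have h0 : (0:Ordinal) < a := pos_iff_ne_zero.2 ha
    have hfe := familyOfBFamily_enum a (fun ξ (_ : ξ < a) => _root_.veblen ξ) 0 h0
    have hfp := derivFamily_fp (f := familyOfBFamily a (fun ξ (_ : ξ < a) => _root_.veblen ξ))
      (i := enum (α := a.ToType) (· < ·) ⟨0, h0.trans_eq (type_toType _).symm⟩)
      (by rw [hfe]; exact _root_.isNormal_veblen 0) b
    rw [hfe] at hfp
    have hv : _root_.veblen a b = derivFamily (familyOfBFamily a (fun ξ (_ : ξ < a) => _root_.veblen ξ)) b := by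
      rw [_root_.veblen_def]; simp [ha]
    conv_lhs => rw [hv, ← hfp, _root_.veblen_zero]
    rw [hv]

/-- The sum of a list of ordinals. -/
def asum (m : List Ordinal) : Ordinal := m.foldr (· + ·) 0

@[simp] theorem asum_nil : asum [] = 0 := rfl

@[simp] theorem asum_cons (p : Ordinal) (m : List Ordinal) : asum (p :: m) = p + asum m := rfl

theorem asum_append (a b : List Ordinal) : asum (a ++ b) = asum a + asum b := by
  induction a with
  | nil => simp
  | cons p t ih => simp [ih, add_assoc]

theorem le_asum {p : Ordinal} {m : List Ordinal} (h : p ∈ m) : p ≤ asum m := by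
  induction m with
  | nil => simp at h
  | cons q t ih =>
    rcases List.mem_cons.1 h with rfl | h
    · exact le_self_add
    · exact (ih h).trans (le_add_self)

theorem asum_lt {m : List Ordinal} {c : Ordinal} (hc : Ordinal.IsPrincipal (· + ·) c)
    (h0 : 0 < c) (h : ∀ p ∈ m, p < c) : asum m < c := by
  induction m with
  | nil => simpa
  | cons q t ih =>
    exact hc (h q (List.mem_cons_self)) (ih fun p hp => h p (List.mem_cons_of_mem _ hp))

/-- `m` is a Cantor-normal-form decomposition of `x`. -/
def IsDecomp (m : List Ordinal) (x : Ordinal) : Prop :=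
  (∀ p ∈ m, ∃ γ : Ordinal, p = omega0 ^ γ) ∧ m.Pairwise (· ≥ ·) ∧ asum m = x

theorem IsDecomp.head_eq {p : Ordinal} {t : List Ordinal} {x : Ordinal}
    (h : IsDecomp (p :: t) x) : p = omega0 ^ Ordinal.log omega0 x := by
  obtain ⟨hprin, hsort, hsum⟩ := h
  obtain ⟨γ, rfl⟩ := hprin p (List.mem_cons_self)
  have hpx : omega0 ^ γ ≤ x := hsum ▸ le_asum (List.mem_cons_self)
  have hx0 : x ≠ 0 := by
    intro h0; rw [h0, nonpos_iff_eq_zero] at hpx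
    exact opow_ne_zero γ omega0_ne_zero hpx
  have h1 : γ ≤ Ordinal.log omega0 x := (opow_le_iff_le_log one_lt_omega0 hx0).1 hpx
  have hlt : x < omega0 ^ (γ + 1) := by
    rw [← hsum]
    refine asum_lt (principal_add_omega0_opow _) (opow_pos _ omega0_pos) ?_
    intro q hq
    have hqp : q ≤ omega0 ^ γ := by
      rcases List.mem_cons.1 hq with rfl | hq
      · exact le_rfl
      · exact (List.pairwise_cons.1 hsort).1 q hq
    refine hqp.trans_lt ((opow_lt_opow_iff_right one_lt_omega0).2 ?_)
    rw [Ordinal.add_one_eq_succ]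
    exact Order.lt_succ γ
  have h2 : Ordinal.log omega0 x ≤ γ := by
    rw [Ordinal.add_one_eq_succ] at hlt
    have := (Ordinal.lt_opow_iff_log_lt one_lt_omega0 hx0).1 hlt
    exact Order.lt_succ_iff.1 this
  rw [le_antisymm h1 h2]

theorem decomp_unique : ∀ {m m' : List Ordinal} {x : Ordinal},
    IsDecomp m x → IsDecomp m' x → m = m' := by
  intro m
  induction m with
  | nil =>
    intro m' x h h'
    have hx : x = 0 := h.2.2.symm
    subst hx
    cases m' with
    | nil => rfl
    | cons q t =>
      obtain ⟨γ, rfl⟩ := h'.1 q (List.mem_cons_self)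
      have hle : omega0 ^ γ ≤ (0 : Ordinal) := h'.2.2 ▸ le_asum (List.mem_cons_self)
      rw [nonpos_iff_eq_zero] at hle
      exact absurd hle (opow_ne_zero γ omega0_ne_zero)
  | cons p t ih =>
    intro m' x h h'
    have hx0 : x ≠ 0 := by
      obtain ⟨γ, hγ⟩ := h.1 p (List.mem_cons_self)
      have hle : p ≤ x := h.2.2 ▸ le_asum (List.mem_cons_self)
      intro h0
      rw [h0, nonpos_iff_eq_zero, hγ] at hle
      exact opow_ne_zero γ omega0_ne_zero hle
    cases m' with
    | nil => exact absurd (h'.2.2.symm : x = 0) hx0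
    | cons q t' =>
      have hpq : p = q := h.head_eq.trans h'.head_eq.symm
      subst hpq
      have hsum : asum t = asum t' := by
        have h12 : p + asum t = p + asum t' := by
          rw [← asum_cons, ← asum_cons, h.2.2, h'.2.2]
        exact (add_right_inj p).1 h12
      have ht : IsDecomp t (asum t) :=
        ⟨fun r hr => h.1 r (List.mem_cons_of_mem _ hr), (List.pairwise_cons.1 h.2.1).2, rfl⟩
      have ht' : IsDecomp t' (asum t) :=
        ⟨fun r hr => h'.1 r (List.mem_cons_of_mem _ hr), (List.pairwise_cons.1 h'.2.1).2, hsum.symm⟩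
      rw [ih ht ht']

theorem sub_log_lt {x : Ordinal} (hx : x ≠ 0) : x - omega0 ^ Ordinal.log omega0 x < x := by
  have hle : omega0 ^ Ordinal.log omega0 x ≤ x := opow_log_le_self omega0 hx
  rcases lt_or_eq_of_le (Ordinal.sub_le_self x _) with h | h
  · exact h
  · exfalso
    have hadd : omega0 ^ Ordinal.log omega0 x + x = x := by
      have h2 := Ordinal.add_sub_cancel_of_le hle
      rwa [h] at h2
    have hmul := Ordinal.add_eq_right_iff_mul_omega0_le.1 hadd
    rw [← opow_succ] at hmul
    exact (lt_opow_succ_log_self one_lt_omega0 x).not_ge hmul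

/-- The canonical decomposition of an ordinal into `ω`-powers. -/
noncomputable def CNFl (x : Ordinal) : List Ordinal :=
  if h : x = 0 then [] else
    omega0 ^ Ordinal.log omega0 x :: CNFl (x - omega0 ^ Ordinal.log omega0 x)
termination_by x
decreasing_by exact sub_log_lt h

theorem mem_CNFl_le {x : Ordinal} : ∀ p ∈ CNFl x, p ≤ omega0 ^ Ordinal.log omega0 x := by
  induction x using Ordinal.induction with
  | _ x IH =>
    intro p hp
    rw [CNFl] at hp
    split at hp
    · simp at hp
    · rename_i hx
      rcases List.mem_cons.1 hp with rfl | hp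
      · exact le_rfl
      · exact (IH _ (sub_log_lt hx) p hp).trans
          (opow_le_opow_right omega0_pos (log_mono_right _ (Ordinal.sub_le_self _ _)))

theorem CNFl_isDecomp {x : Ordinal} : IsDecomp (CNFl x) x := by
  induction x using Ordinal.induction with
  | _ x IH =>
    rw [CNFl]
    split
    · rename_i h; subst h; exact ⟨by simp, by simp, rfl⟩
    · rename_i hx
      obtain ⟨h1, h2, h3⟩ := IH _ (sub_log_lt hx)
      refine ⟨?_, ?_, ?_⟩
      · intro p hp
        rcases List.mem_cons.1 hp with rfl | hp
        · exact ⟨_, rfl⟩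
        · exact h1 p hp
      · rw [List.pairwise_cons]
        refine ⟨fun b hb => ?_, h2⟩
        exact (mem_CNFl_le b hb).trans
          (opow_le_opow_right omega0_pos (log_mono_right _ (Ordinal.sub_le_self _ _)))
      · rw [asum_cons, h3]; exact Ordinal.add_sub_cancel_of_le (opow_log_le_self _ hx)

theorem dropWhile_lt {h : Ordinal} : ∀ {l : List Ordinal}, l.Pairwise (· ≥ ·) →
    ∀ q ∈ l.dropWhile (fun p => decide (h ≤ p)), q < h := by
  intro l
  induction l with
  | nil => intro _ q hq; simp at hq
  | cons a t ih =>
    intro hs q hq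
    rw [List.dropWhile_cons] at hq
    split at hq
    · exact ih (List.pairwise_cons.1 hs).2 q hq
    · rename_i hd
      have ha : ¬ h ≤ a := by simpa using hd
      rcases List.mem_cons.1 hq with rfl | hq
      · exact lt_of_not_ge ha
      · exact ((List.pairwise_cons.1 hs).1 q hq).trans_lt (lt_of_not_ge ha)

theorem sorted_append_ge {l₁ l₂ : List Ordinal} (h₁ : l₁.Pairwise (· ≥ ·)) (h₂ : l₂.Pairwise (· ≥ ·))
    (h : ∀ a ∈ l₁, ∀ b ∈ l₂, b ≤ a) : (l₁ ++ l₂).Pairwise (· ≥ ·) := by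
  induction l₁ with
  | nil => simpa
  | cons a t ih =>
    rw [List.cons_append, List.pairwise_cons]
    refine ⟨?_, ih (List.pairwise_cons.1 h₁).2
      (fun a' ha' b hb => h a' (List.mem_cons_of_mem _ ha') b hb)⟩
    intro b hb
    rcases List.mem_append.1 hb with hb | hb
    · exact (List.pairwise_cons.1 h₁).1 b hb
    · exact h a (List.mem_cons_self) b hb

theorem BB_closed {θ α : Ordinal} :
    0 ∈ BB θ α ∧ OmegaB θ ∈ BB θ α ∧ (∀ β ≤ θ, Gamma β ∈ BB θ α) ∧
    (∀ x ∈ BB θ α, ∀ y ∈ BB θ α, x + y ∈ BB θ α) ∧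
    (∀ x ∈ BB θ α, ∀ y ∈ BB θ α, _root_.veblen x y ∈ BB θ α) ∧
    (∀ ξ (_ : ξ < α), ξ ∈ BB θ α → psiB θ ξ ∈ BB θ α) := by
  refine ⟨Set.mem_sInter.2 fun S hS => hS.1, Set.mem_sInter.2 fun S hS => hS.2.1,
    fun β hβ => Set.mem_sInter.2 fun S hS => hS.2.2.1 β hβ,
    fun x hx y hy => Set.mem_sInter.2 fun S hS =>
      hS.2.2.2.1 x (Set.mem_sInter.1 hx S hS) y (Set.mem_sInter.1 hy S hS),
    fun x hx y hy => Set.mem_sInter.2 fun S hS =>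
      hS.2.2.2.2.1 x (Set.mem_sInter.1 hx S hS) y (Set.mem_sInter.1 hy S hS),
    fun ξ hξ hmem => Set.mem_sInter.2 fun S hS =>
      hS.2.2.2.2.2 ξ hξ (Set.mem_sInter.1 hmem S hS)⟩

theorem psiB_def (θ ξ : Ordinal) : psiB θ ξ = sInf {β | β ∉ BB θ ξ} := by
  rw [psiB, WellFounded.fix_eq]
  rfl

theorem psiB_zero_or_principal (θ ξ : Ordinal) :
    psiB θ ξ = 0 ∨ ∃ γ : Ordinal, psiB θ ξ = omega0 ^ γ := by
  rcases Set.eq_empty_or_nonempty {β | β ∉ BB θ ξ} with he | hne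
  · left; rw [psiB_def, he]; exact Ordinal.sInf_empty
  · right
    have hm : psiB θ ξ ∉ BB θ ξ := by
      have := csInf_mem hne
      rwa [← psiB_def] at this
    have hbelow : ∀ β < psiB θ ξ, β ∈ BB θ ξ := by
      intro β hβ
      by_contra hc
      rw [psiB_def] at hβ
      exact hβ.not_ge (csInf_le' hc)
    have hm0 : psiB θ ξ ≠ 0 := fun h0 => hm (h0 ▸ BB_closed.1)
    have hle : omega0 ^ Ordinal.log omega0 (psiB θ ξ) ≤ psiB θ ξ := opow_log_le_self _ hm0
    rcases eq_or_lt_of_le hle with heq | hlt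
    · exact ⟨_, heq.symm⟩
    · exfalso
      have hadd := BB_closed.2.2.2.1 _ (hbelow _ hlt) _ (hbelow _ (sub_log_lt hm0))
      rw [Ordinal.add_sub_cancel_of_le hle] at hadd
      exact hm hadd

theorem OmegaB_zero_or_principal (θ : Ordinal) :
    OmegaB θ = 0 ∨ ∃ γ : Ordinal, OmegaB θ = omega0 ^ γ := by
  rcases Set.eq_empty_or_nonempty {o | θ < o ∧ o.card.ord = o ∧ Cardinal.aleph0 < o.card}
    with he | hne
  · left; rw [OmegaB, he]; exact Ordinal.sInf_empty
  · have hmem : OmegaB θ ∈ {o | θ < o ∧ o.card.ord = o ∧ Cardinal.aleph0 < o.card} := by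
      rw [OmegaB]; exact csInf_mem hne
    obtain ⟨-, hcard, hℵ⟩ := hmem
    have hprin : Ordinal.IsPrincipal (· + ·) (OmegaB θ) := by
      intro a b ha hb
      show a + b < OmegaB θ
      rw [← hcard] at ha hb ⊢
      rw [Cardinal.lt_ord] at ha hb ⊢
      rw [Ordinal.card_add]
      exact Cardinal.add_lt_of_lt hℵ.le ha hb
    rcases (Ordinal.principal_add_iff_zero_or_omega0_opow).1 hprin with h0 | ⟨a, ha⟩
    · exact Or.inl h0
    · exact Or.inr ⟨a, ha.symm⟩

theorem Gamma_zero_or_principal (β : Ordinal) :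
    Gamma β = 0 ∨ ∃ γ : Ordinal, Gamma β = omega0 ^ γ := by
  have hdef : Gamma β = sInf ({γ | StronglyCritical γ} ∩
      {b | ∀ c, c < β → enumOrd {γ | StronglyCritical γ} c < b}) := by
    unfold Gamma
    rw [Ordinal.enumOrd]
  rcases Set.eq_empty_or_nonempty ({γ | StronglyCritical γ} ∩
      {b | ∀ c, c < β → enumOrd {γ | StronglyCritical γ} c < b}) with he | hne
  · left; rw [hdef, he]; exact Ordinal.sInf_empty
  · right
    have hmem := csInf_mem hne
    rw [← hdef] at hmem
    have hsc : StronglyCritical (Gamma β) := hmem.1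
    obtain ⟨γ, hγ⟩ := _root_.veblen_principal (Gamma β) 0
    refine ⟨γ, ?_⟩
    conv_lhs => rw [← hsc]
    exact hγ

theorem decomp_mem_BB {θ η x : Ordinal} (hx : x ∈ BB θ η)
    (hp : x = 0 ∨ ∃ γ : Ordinal, x = omega0 ^ γ) {m : List Ordinal} (hm : IsDecomp m x) :
    ∀ p ∈ m, p ∈ BB θ η := by
  rcases hp with rfl | ⟨γ, rfl⟩
  · intro p hp
    obtain ⟨δ, rfl⟩ := hm.1 p hp
    have hle : omega0 ^ δ ≤ (0 : Ordinal) := hm.2.2 ▸ le_asum hp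
    rw [nonpos_iff_eq_zero] at hle
    exact absurd hle (opow_ne_zero δ omega0_ne_zero)
  · intro p hp
    cases m with
    | nil => simp at hp
    | cons q t =>
      have hq : ∀ r ∈ q :: t, r ≤ q := by
        intro r hr
        rcases List.mem_cons.1 hr with rfl | hr
        · exact le_rfl
        · exact (List.pairwise_cons.1 hm.2.1).1 r hr
      rcases lt_or_ge q (omega0 ^ γ) with hlt | hge
      · exfalso
        have hss : asum (q :: t) < omega0 ^ γ :=
          asum_lt (principal_add_omega0_opow γ) (opow_pos γ omega0_pos)
            (fun r hr => (hq r hr).trans_lt hlt)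
        rw [hm.2.2] at hss
        exact hss.false
      · have hqx : q = omega0 ^ γ :=
          le_antisymm (hm.2.2 ▸ le_asum (List.mem_cons_self)) hge
        have ht0 : asum t = 0 := by
          have h12 : omega0 ^ γ + asum t = omega0 ^ γ + 0 := by
            rw [add_zero]
            have hss := hm.2.2
            rwa [asum_cons, hqx] at hss
          exact (add_right_inj _).1 h12
        rcases List.mem_cons.1 hp with rfl | hp'
        · rw [hqx]; exact hx
        · exfalso
          obtain ⟨δ, hδ⟩ := hm.1 p (List.mem_cons_of_mem _ hp')
          have hle : p ≤ asum t := le_asum hp'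
          rw [ht0, nonpos_iff_eq_zero, hδ] at hle
          exact opow_ne_zero δ omega0_ne_zero hle

end Aux

theorem stmt16 (θ η α : Ordinal) (l : List Ordinal) (hn : 1 < l.length)
    (hprinc : ∀ x ∈ l, ∃ γ, x = Ordinal.omega0 ^ γ)
    (hsorted : l.Pairwise (· ≥ ·)) (hsum : α = l.foldr (· + ·) 0) :
    α ∈ BB θ η ↔ ∀ x ∈ l, x ∈ BB θ η := by
  constructor
  · intro hα
    have hTmem : {x | x ∈ BB θ η ∧ ∀ m : List Ordinal, IsDecomp m x → ∀ p ∈ m, p ∈ BB θ η}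
        ∈ {S : Set Ordinal |
        0 ∈ S ∧ OmegaB θ ∈ S ∧ (∀ β ≤ θ, Gamma β ∈ S) ∧
        (∀ x ∈ S, ∀ y ∈ S, x + y ∈ S) ∧
        (∀ x ∈ S, ∀ y ∈ S, _root_.veblen x y ∈ S) ∧
        (∀ ξ (h : ξ < η), ξ ∈ S → (fun ξ (_ : ξ < η) => psiB θ ξ) ξ h ∈ S)} := by
      refine ⟨⟨BB_closed.1, fun m hm => decomp_mem_BB BB_closed.1 (Or.inl rfl) hm⟩,
        ⟨BB_closed.2.1, fun m hm =>
          decomp_mem_BB BB_closed.2.1 (OmegaB_zero_or_principal θ) hm⟩,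
        fun β hβ => ⟨BB_closed.2.2.1 β hβ, fun m hm =>
          decomp_mem_BB (BB_closed.2.2.1 β hβ) (Gamma_zero_or_principal β) hm⟩,
        ?_,
        fun x hx y hy => ⟨BB_closed.2.2.2.2.1 x hx.1 y hy.1, fun m hm =>
          decomp_mem_BB (BB_closed.2.2.2.2.1 x hx.1 y hy.1)
            (Or.inr (_root_.veblen_principal x y)) hm⟩,
        fun ξ hξ hξT => ⟨BB_closed.2.2.2.2.2 ξ hξ hξT.1, fun m hm =>
          decomp_mem_BB (BB_closed.2.2.2.2.2 ξ hξ hξT.1) (psiB_zero_or_principal θ ξ) hm⟩⟩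
      -- addition closure
      rintro x ⟨hxB, hxP⟩ y ⟨hyB, hyP⟩
      refine ⟨BB_closed.2.2.2.1 x hxB y hyB, ?_⟩
      intro m hm
      rcases eq_or_ne y 0 with rfl | hy0
      · rw [add_zero] at hm
        exact hxP m hm
      · have hCx : IsDecomp (CNFl x) x := CNFl_isDecomp
        have hCy : IsDecomp (CNFl y) y := CNFl_isDecomp
        set h : Ordinal := omega0 ^ Ordinal.log omega0 y with hh
        have hm1sub : List.Sublist ((CNFl x).takeWhile (fun p => decide (h ≤ p))) (CNFl x) :=
          List.takeWhile_sublist _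
        have hdecomp : IsDecomp ((CNFl x).takeWhile (fun p => decide (h ≤ p)) ++ CNFl y)
            (x + y) := by
          refine ⟨?_, ?_, ?_⟩
          · intro p hp
            rcases List.mem_append.1 hp with hp | hp
            · exact hCx.1 p (hm1sub.subset hp)
            · exact hCy.1 p hp
          · refine sorted_append_ge (List.Pairwise.sublist hm1sub hCx.2.1) hCy.2.1 ?_
            intro a ha b hb
            have hha : h ≤ a := by
              simpa using List.mem_takeWhile_imp (p := fun p => decide (h ≤ p)) ha
            exact (mem_CNFl_le b hb).trans hha
          · rw [asum_append, hCy.2.2]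
            have hx0 : asum ((CNFl x).dropWhile (fun p => decide (h ≤ p))) + y = y := by
              refine Ordinal.add_absorp (b := Ordinal.log omega0 y) ?_ (opow_log_le_self _ hy0)
              exact asum_lt (principal_add_omega0_opow _) (opow_pos _ omega0_pos)
                (fun q hq => dropWhile_lt hCx.2.1 q hq)
            have hassoc : asum ((CNFl x).takeWhile (fun p => decide (h ≤ p))) +
                (asum ((CNFl x).dropWhile (fun p => decide (h ≤ p))) + y) = x + y := by
              rw [← add_assoc, ← asum_append, List.takeWhile_append_dropWhile, hCx.2.2]
            conv_lhs => rw [← hx0]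
            exact hassoc
        have hmeq : m = _ := decomp_unique hm hdecomp
        intro p hp
        rw [hmeq] at hp
        rcases List.mem_append.1 hp with hp | hp
        · exact hxP (CNFl x) hCx p (hm1sub.subset hp)
        · exact hyP (CNFl y) hCy p hp
    have hαT := Set.sInter_subset_of_mem hTmem hα
    intro x hx
    refine hαT.2 l ⟨?_, hsorted, hsum.symm⟩ x hx
    intro p hp
    obtain ⟨n, hn'⟩ := hprinc p hp
    exact ⟨(n : Ordinal), by rw [hn', opow_natCast]⟩
  · intro hl
    rw [hsum]
    have hclosed : ∀ m : List Ordinal, (∀ x ∈ m, x ∈ BB θ η) → asum m ∈ BB θ η := by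
      intro m
      induction m with
      | nil => intro _; exact BB_closed.1
      | cons q t ih =>
        intro hmem
        exact BB_closed.2.2.2.1 _ (hmem q (List.mem_cons_self)) _
          (ih fun x hx => hmem x (List.mem_cons_of_mem _ hx))
    exact hclosed l hl
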